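/- Let (Y,Z) be an ℕ²-valued random variable with π_{k,l} := P(Y=k,Z=l), and suppose π_{k1,k2} ≥ δ, π_{k1+1,k2} ≥ δ, π_{k1,k2+1} ≥ δ for some k1,k2 ∈ ℕ and δ > 0. Then for the moment generating function f(y,z) = E[e^{yY+zZ}] evaluated at real α,β and real u,v with |u|,|v| ≤ π, one has f(α,β)² − |f(α+iu,β+iv)|² ≥ δ² e^{(2k1+1)α+2k2β}(1−cos u) + δ² e^{2k1α+(2k2+1)β}(1−cos v). -/

import Mathlib

open MeasureTheory Real

/-- If `(Y,Z)` is an `ℕ²`-valued random variable with point probabilities at least `δ`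
at `(k₁,k₂)`, `(k₁+1,k₂)` and `(k₁,k₂+1)`, then the bivariate moment generating function
`f(y,z) = E[e^{yY+zZ}]` satisfies, for real `α, β` and `|u|,|v| ≤ π`,
`f(α,β)² − |f(α+iu,β+iv)|² ≥ δ²e^{(2k₁+1)α+2k₂β}(1−cos u) + δ²e^{2k₁α+(2k₂+1)β}(1−cos v)`. -/
theorem mgf_modulus_squared_drop
    {Ω : Type*} [MeasurableSpace Ω] (μ : Measure Ω) [IsProbabilityMeasure μ]
    (Y Z : Ω → ℕ) (hY : Measurable Y) (hZ : Measurable Z)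
    (k₁ k₂ : ℕ) (δ : ℝ) (hδ : 0 < δ)
    (h1 : ENNReal.ofReal δ ≤ μ {ω | Y ω = k₁ ∧ Z ω = k₂})
    (h2 : ENNReal.ofReal δ ≤ μ {ω | Y ω = k₁ + 1 ∧ Z ω = k₂})
    (h3 : ENNReal.ofReal δ ≤ μ {ω | Y ω = k₁ ∧ Z ω = k₂ + 1})
    (α β u v : ℝ) (hu : |u| ≤ π) (hv : |v| ≤ π)
    (hint : Integrable (fun ω => Real.exp (α * Y ω + β * Z ω)) μ) :
    δ ^ 2 * Real.exp ((2 * k₁ + 1) * α + 2 * k₂ * β) * (1 - Real.cos u)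
      + δ ^ 2 * Real.exp (2 * k₁ * α + (2 * k₂ + 1) * β) * (1 - Real.cos v)
    ≤ (∫ ω, Real.exp (α * Y ω + β * Z ω) ∂μ) ^ 2
      - ‖∫ ω, Complex.exp ((α + u * Complex.I) * (Y ω : ℂ)
          + (β + v * Complex.I) * (Z ω : ℂ)) ∂μ‖ ^ 2 := by
  set g : Ω → ℝ := fun ω => Real.exp (α * Y ω + β * Z ω) with hg_def
  set θ : Ω → ℝ := fun ω => u * Y ω + v * Z ω with hθ_def
  set c : Ω → ℝ := fun ω => g ω * Real.cos (θ ω) with hc_def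
  set s : Ω → ℝ := fun ω => g ω * Real.sin (θ ω) with hs_def
  -- measurability
  have hYr : Measurable fun ω => (Y ω : ℝ) := measurable_from_top.comp hY
  have hZr : Measurable fun ω => (Z ω : ℝ) := measurable_from_top.comp hZ
  have hgm : Measurable g := ((hYr.const_mul α).add (hZr.const_mul β)).exp
  have hθm : Measurable θ := (hYr.const_mul u).add (hZr.const_mul v)
  have hcm : Measurable c := hgm.mul hθm.cos
  have hsm : Measurable s := hgm.mul hθm.sin
  have hgpos : ∀ ω, 0 < g ω := fun ω => Real.exp_pos _
  -- integrability
  have hc_int : Integrable c μ := by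
    refine hint.mono' hcm.aestronglyMeasurable (Filter.Eventually.of_forall fun ω => ?_)
    rw [hc_def]
    calc ‖g ω * Real.cos (θ ω)‖ = g ω * |Real.cos (θ ω)| := by
          rw [norm_mul, Real.norm_eq_abs, Real.norm_eq_abs, abs_of_pos (hgpos ω)]
      _ ≤ g ω * 1 := by
          exact mul_le_mul_of_nonneg_left (abs_cos_le_one _) (hgpos ω).le
      _ = g ω := mul_one _
  have hs_int : Integrable s μ := by
    refine hint.mono' hsm.aestronglyMeasurable (Filter.Eventually.of_forall fun ω => ?_)
    rw [hs_def]
    calc ‖g ω * Real.sin (θ ω)‖ = g ω * |Real.sin (θ ω)| := by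
          rw [norm_mul, Real.norm_eq_abs, Real.norm_eq_abs, abs_of_pos (hgpos ω)]
      _ ≤ g ω * 1 := mul_le_mul_of_nonneg_left (abs_sin_le_one _) (hgpos ω).le
      _ = g ω := mul_one _
  -- the complex integrand
  have hpt : ∀ ω, Complex.exp ((α + u * Complex.I) * (Y ω : ℂ)
      + (β + v * Complex.I) * (Z ω : ℂ)) = (c ω : ℂ) + (s ω : ℂ) * Complex.I := by
    intro ω
    have : ((α : ℂ) + u * Complex.I) * (Y ω : ℂ) + ((β : ℂ) + v * Complex.I) * (Z ω : ℂ)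
        = ((α * Y ω + β * Z ω : ℝ) : ℂ) + ((θ ω : ℝ) : ℂ) * Complex.I := by
      push_cast [hθ_def]; ring
    rw [this, Complex.exp_add, Complex.exp_mul_I, ← Complex.ofReal_exp,
      ← Complex.ofReal_cos, ← Complex.ofReal_sin, hc_def, hs_def]
    simp only [hg_def, Complex.ofReal_exp, Complex.ofReal_mul, Complex.ofReal_add,
      Complex.ofReal_natCast]
    ring
  have hFi : (∫ ω, Complex.exp ((α + u * Complex.I) * (Y ω : ℂ)
      + (β + v * Complex.I) * (Z ω : ℂ)) ∂μ) = ((∫ ω, c ω ∂μ : ℝ) : ℂ)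
        + ((∫ ω, s ω ∂μ : ℝ) : ℂ) * Complex.I := by
    simp only [hpt]
    have i1 : Integrable (fun ω => (c ω : ℂ)) μ := hc_int.ofReal
    have i2 : Integrable (fun ω => (s ω : ℂ) * Complex.I) μ := hs_int.ofReal.mul_const _
    rw [integral_add i1 i2, integral_mul_const,
      show ∫ a, ((c a : ℝ) : ℂ) ∂μ = ((∫ a, c a ∂μ : ℝ) : ℂ) from integral_ofReal,
      show ∫ a, ((s a : ℝ) : ℂ) ∂μ = ((∫ a, s a ∂μ : ℝ) : ℂ) from integral_ofReal]
  have hnorm : ‖∫ ω, Complex.exp ((α + u * Complex.I) * (Y ω : ℂ)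
      + (β + v * Complex.I) * (Z ω : ℂ)) ∂μ‖ ^ 2
      = (∫ ω, c ω ∂μ) ^ 2 + (∫ ω, s ω ∂μ) ^ 2 := by
    rw [hFi, ← Complex.normSq_add_mul_I, ← Complex.sq_norm]
  rw [hnorm]
  -- product measure
  set H : Ω × Ω → ℝ := fun p => g p.1 * g p.2 * (1 - Real.cos (θ p.1 - θ p.2)) with hH_def
  have hHpt : ∀ p : Ω × Ω, H p = g p.1 * g p.2 - (c p.1 * c p.2 + s p.1 * s p.2) := by
    intro p
    rw [hH_def]
    simp only [hc_def, hs_def, Real.cos_sub]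
    ring
  have hgg : Integrable (fun p : Ω × Ω => g p.1 * g p.2) (μ.prod μ) := hint.mul_prod hint
  have hcc : Integrable (fun p : Ω × Ω => c p.1 * c p.2) (μ.prod μ) := hc_int.mul_prod hc_int
  have hss : Integrable (fun p : Ω × Ω => s p.1 * s p.2) (μ.prod μ) := hs_int.mul_prod hs_int
  have hH_int : Integrable H (μ.prod μ) := by
    have : H = fun p => (fun p : Ω × Ω => g p.1 * g p.2) p
        - ((fun p : Ω × Ω => c p.1 * c p.2) p + (fun p : Ω × Ω => s p.1 * s p.2) p) :=
      funext hHpt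
    rw [this]
    exact hgg.sub (hcc.add hss)
  have key : ∫ p, H p ∂(μ.prod μ)
      = (∫ ω, g ω ∂μ) ^ 2 - ((∫ ω, c ω ∂μ) ^ 2 + (∫ ω, s ω ∂μ) ^ 2) := by
    have congr1 : ∫ p, H p ∂(μ.prod μ)
        = ∫ p : Ω × Ω, (g p.1 * g p.2 - (c p.1 * c p.2 + s p.1 * s p.2)) ∂(μ.prod μ) :=
      integral_congr_ae (Filter.Eventually.of_forall fun p => hHpt p)
    have hcs : Integrable (fun p : Ω × Ω => c p.1 * c p.2 + s p.1 * s p.2) (μ.prod μ) :=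
      hcc.add hss
    rw [congr1, integral_sub hgg hcs, integral_add hcc hss,
      integral_prod_mul, integral_prod_mul, integral_prod_mul, sq, sq, sq]
  -- nonnegativity of H
  have hH_nonneg : ∀ p, 0 ≤ H p := by
    intro p
    apply mul_nonneg (mul_nonneg (hgpos _).le (hgpos _).le)
    linarith [Real.cos_le_one (θ p.1 - θ p.2)]
  -- the sets
  set A : Set Ω := {ω | Y ω = k₁ ∧ Z ω = k₂} with hA_def
  set B : Set Ω := {ω | Y ω = k₁ + 1 ∧ Z ω = k₂} with hB_def
  set C : Set Ω := {ω | Y ω = k₁ ∧ Z ω = k₂ + 1} with hC_def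
  have hAm : MeasurableSet A := (hY (measurableSet_singleton k₁)).inter (hZ (measurableSet_singleton k₂))
  have hBm : MeasurableSet B := (hY (measurableSet_singleton (k₁+1))).inter (hZ (measurableSet_singleton k₂))
  have hCm : MeasurableSet C := (hY (measurableSet_singleton k₁)).inter (hZ (measurableSet_singleton (k₂+1)))
  have hdisj : Disjoint (A ×ˢ B) (A ×ˢ C) := by
    rw [Set.disjoint_left]
    rintro p ⟨-, hpB⟩ ⟨-, hpC⟩
    exact absurd (hpB.2.symm.trans hpC.2) (by omega)
  have hmeas_lb : ∀ (S : Set Ω), ENNReal.ofReal δ ≤ μ S → ∀ (T : Set Ω),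
      ENNReal.ofReal δ ≤ μ T → δ ^ 2 ≤ ((μ.prod μ) (S ×ˢ T)).toReal := by
    intro S hS T hT
    rw [Measure.prod_prod]
    have h1 : ENNReal.ofReal (δ ^ 2) ≤ μ S * μ T := by
      rw [sq, ENNReal.ofReal_mul hδ.le]
      exact mul_le_mul' hS hT
    have h2 : μ S * μ T ≠ ⊤ :=
      (ENNReal.mul_lt_top (measure_lt_top μ S) (measure_lt_top μ T)).ne
    calc δ ^ 2 = (ENNReal.ofReal (δ ^ 2)).toReal := (ENNReal.toReal_ofReal (by positivity)).symm
      _ ≤ (μ S * μ T).toReal := ENNReal.toReal_mono h2 h1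
  -- value of H on the product sets
  have hval1 : ∀ p ∈ A ×ˢ B, Real.exp ((2 * k₁ + 1) * α + 2 * k₂ * β) * (1 - Real.cos u) ≤ H p := by
    rintro p ⟨⟨hY1, hZ1⟩, hY2, hZ2⟩
    rw [hH_def]
    simp only [hg_def, hθ_def, hY1, hZ1, hY2, hZ2]
    rw [← Real.exp_add]
    have e1 : α * (k₁:ℝ) + β * k₂ + (α * ((k₁:ℕ)+1:ℕ) + β * k₂) = (2 * k₁ + 1) * α + 2 * k₂ * β := by
      push_cast; ring
    have e2 : u * (k₁:ℝ) + v * k₂ - (u * ((k₁:ℕ)+1:ℕ) + v * k₂) = -u := by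
      push_cast; ring
    rw [e1, e2, Real.cos_neg]
  have hval2 : ∀ p ∈ A ×ˢ C, Real.exp (2 * k₁ * α + (2 * k₂ + 1) * β) * (1 - Real.cos v) ≤ H p := by
    rintro p ⟨⟨hY1, hZ1⟩, hY2, hZ2⟩
    rw [hH_def]
    simp only [hg_def, hθ_def, hY1, hZ1, hY2, hZ2]
    rw [← Real.exp_add]
    have e1 : α * (k₁:ℝ) + β * k₂ + (α * k₁ + β * ((k₂:ℕ)+1:ℕ)) = 2 * k₁ * α + (2 * k₂ + 1) * β := by
      push_cast; ring
    have e2 : u * (k₁:ℝ) + v * k₂ - (u * k₁ + v * ((k₂:ℕ)+1:ℕ)) = -v := by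
      push_cast; ring
    rw [e1, e2, Real.cos_neg]
  -- lower bounds on set integrals
  have hSB : δ ^ 2 * Real.exp ((2 * k₁ + 1) * α + 2 * k₂ * β) * (1 - Real.cos u)
      ≤ ∫ p in A ×ˢ B, H p ∂(μ.prod μ) := by
    have := setIntegral_ge_of_const_le (hAm.prod hBm)
      (measure_ne_top _ _) hval1 (hH_int.integrableOn)
    refine le_trans ?_ this
    have hc1 : 0 ≤ Real.exp ((2 * k₁ + 1) * α + 2 * k₂ * β) * (1 - Real.cos u) :=
      mul_nonneg (Real.exp_pos _).le (by linarith [Real.cos_le_one u])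
    calc δ ^ 2 * Real.exp ((2 * k₁ + 1) * α + 2 * k₂ * β) * (1 - Real.cos u)
        = Real.exp ((2 * k₁ + 1) * α + 2 * k₂ * β) * (1 - Real.cos u) * δ ^ 2 := by ring
      _ ≤ Real.exp ((2 * k₁ + 1) * α + 2 * k₂ * β) * (1 - Real.cos u)
            * ((μ.prod μ) (A ×ˢ B)).toReal :=
          mul_le_mul_of_nonneg_left (hmeas_lb A h1 B h2) hc1
      _ = (μ.prod μ).real (A ×ˢ B) • (Real.exp ((2 * k₁ + 1) * α + 2 * k₂ * β) * (1 - Real.cos u)) := by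
          rw [smul_eq_mul, mul_comm, Measure.real_def]
  have hSC : δ ^ 2 * Real.exp (2 * k₁ * α + (2 * k₂ + 1) * β) * (1 - Real.cos v)
      ≤ ∫ p in A ×ˢ C, H p ∂(μ.prod μ) := by
    have := setIntegral_ge_of_const_le (hAm.prod hCm)
      (measure_ne_top _ _) hval2 (hH_int.integrableOn)
    refine le_trans ?_ this
    have hc1 : 0 ≤ Real.exp (2 * k₁ * α + (2 * k₂ + 1) * β) * (1 - Real.cos v) :=
      mul_nonneg (Real.exp_pos _).le (by linarith [Real.cos_le_one v])
    calc δ ^ 2 * Real.exp (2 * k₁ * α + (2 * k₂ + 1) * β) * (1 - Real.cos v)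
        = Real.exp (2 * k₁ * α + (2 * k₂ + 1) * β) * (1 - Real.cos v) * δ ^ 2 := by ring
      _ ≤ Real.exp (2 * k₁ * α + (2 * k₂ + 1) * β) * (1 - Real.cos v)
            * ((μ.prod μ) (A ×ˢ C)).toReal :=
          mul_le_mul_of_nonneg_left (hmeas_lb A h1 C h3) hc1
      _ = (μ.prod μ).real (A ×ˢ C) • (Real.exp (2 * k₁ * α + (2 * k₂ + 1) * β) * (1 - Real.cos v)) := by
          rw [smul_eq_mul, mul_comm, Measure.real_def]
  have hunion : ∫ p in (A ×ˢ B) ∪ (A ×ˢ C), H p ∂(μ.prod μ)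
      = (∫ p in A ×ˢ B, H p ∂(μ.prod μ)) + ∫ p in A ×ˢ C, H p ∂(μ.prod μ) :=
    setIntegral_union hdisj (hAm.prod hCm) hH_int.integrableOn hH_int.integrableOn
  have hfinal : (∫ p in (A ×ˢ B) ∪ (A ×ˢ C), H p ∂(μ.prod μ)) ≤ ∫ p, H p ∂(μ.prod μ) :=
    setIntegral_le_integral hH_int (Filter.Eventually.of_forall hH_nonneg)
  linarith [hSB, hSC, hunion, hfinal, key]
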